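/- Let (Y_{i,d})_{i ∈ [ℓ], d ∈ [n]} be random variables such that for each fixed i the family (Y_{i,d})_{d ∈ [n]} is pairwise independent Bernoulli(1/2), and the ℓ families are mutually independent across i. Define X_{i,d} = ∏_{j=1}^{i} Y_{j,d}. Then for each fixed i ∈ [ℓ], the family (X_{i,d})_{d ∈ [n]} is pairwise independent, and P(X_{i,d} = 1) = 2^{-i} for all d. -/

import Mathlib

open MeasureTheory ProbabilityTheory

lemma aux_prod01 {ι : Type*} (s : Finset ι) (f : ι → ℕ)
    (hf : ∀ j ∈ s, f j = 0 ∨ f j = 1) :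
    (∏ j ∈ s, f j) = 1 ↔ ∀ j ∈ s, f j = 1 := by
  constructor
  · intro h j hj
    rcases hf j hj with h0 | h1
    · exact absurd (h ▸ Finset.prod_eq_zero hj h0) (by simp)
    · exact h1
  · exact Finset.prod_eq_one

lemma aux_prod01' {ι : Type*} (s : Finset ι) (f : ι → ℕ)
    (hf : ∀ j ∈ s, f j = 0 ∨ f j = 1) :
    (∏ j ∈ s, f j) = 0 ∨ (∏ j ∈ s, f j) = 1 := by
  have : (∏ j ∈ s, f j) ≤ 1 :=
    Finset.prod_le_one (fun j _ => Nat.zero_le _) (fun j hj => by rcases hf j hj with h | h <;> omega)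
  omega

lemma aux_indep_compl_right {Ω : Type*} [MeasureSpace Ω]
    [IsProbabilityMeasure (ℙ : Measure Ω)] {A B : Set Ω}
    (hB : MeasurableSet B) (h : ℙ (A ∩ B) = ℙ A * ℙ B) :
    ℙ (A ∩ Bᶜ) = ℙ A * ℙ Bᶜ := by
  have h1 : ℙ (A ∩ B) + ℙ (A \ B) = ℙ A := measure_inter_add_diff A hB
  have h2 : ℙ B + ℙ Bᶜ = 1 := by
    rw [measure_add_measure_compl hB, measure_univ]
  have h3 : ℙ A * ℙ B + ℙ A * ℙ Bᶜ = ℙ A := by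
    rw [← mul_add, h2, mul_one]
  have h4 : ℙ A * ℙ B + ℙ (A ∩ Bᶜ) = ℙ A * ℙ B + ℙ A * ℙ Bᶜ := by
    rw [h3, ← h, ← Set.diff_eq]; exact h1
  exact (ENNReal.add_right_inj (by finiteness)).mp h4

lemma aux_indep_compl_left {Ω : Type*} [MeasureSpace Ω]
    [IsProbabilityMeasure (ℙ : Measure Ω)] {A B : Set Ω}
    (hA : MeasurableSet A) (h : ℙ (A ∩ B) = ℙ A * ℙ B) :
    ℙ (Aᶜ ∩ B) = ℙ Aᶜ * ℙ B := by
  rw [Set.inter_comm, mul_comm]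
  exact aux_indep_compl_right hA (by rw [Set.inter_comm, mul_comm]; exact h)

theorem stmt_7 {Ω : Type*} [MeasureSpace Ω] [IsProbabilityMeasure (ℙ : Measure Ω)]
    (ℓ n : ℕ) (Y : ℕ → ℕ → Ω → ℕ)
    (hY01 : ∀ i d ω, Y i d ω = 0 ∨ Y i d ω = 1)
    (hmeas : ∀ i d, Measurable (Y i d))
    (hhalf : ∀ i ∈ Finset.Icc 1 ℓ, ∀ d : Fin n,
      ℙ {ω | Y i d ω = 1} = 1 / 2)
    (hpair : ∀ i ∈ Finset.Icc 1 ℓ, ∀ d e : Fin n, d ≠ e → ∀ a b : ℕ,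
      ℙ {ω | Y i d ω = a ∧ Y i e ω = b}
        = ℙ {ω | Y i d ω = a} * ℙ {ω | Y i e ω = b})
    (hindep : iIndepFun
      (fun (i : Fin ℓ) (ω : Ω) => fun d : Fin n => Y ((i : ℕ) + 1) d ω) ℙ) :
    ∀ i ∈ Finset.Icc 1 ℓ,
      (∀ d : Fin n,
        ℙ {ω | (∏ j ∈ Finset.Icc 1 i, Y j d ω) = 1} = (1 / 2 : ENNReal) ^ i) ∧
      (∀ d e : Fin n, d ≠ e → ∀ a b : ℕ,
        ℙ {ω | (∏ j ∈ Finset.Icc 1 i, Y j d ω) = a ∧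
               (∏ j ∈ Finset.Icc 1 i, Y j e ω) = b}
          = ℙ {ω | (∏ j ∈ Finset.Icc 1 i, Y j d ω) = a}
            * ℙ {ω | (∏ j ∈ Finset.Icc 1 i, Y j e ω) = b}) := by
  classical
  intro i hi
  obtain ⟨hi1, hil⟩ := Finset.mem_Icc.mp hi
  set F : Fin ℓ → Ω → (Fin n → ℕ) :=
    fun (k : Fin ℓ) (ω : Ω) => fun d : Fin n => Y ((k : ℕ) + 1) d ω with hF
  set s : Finset (Fin ℓ) := Finset.univ.filter (fun k => (k : ℕ) < i) with hs
  have hmem_s : ∀ k : Fin ℓ, k ∈ s ↔ (k : ℕ) < i := by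
    intro k; simp [hs]
  have hmemIcc : ∀ k : Fin ℓ, k ∈ s → (k : ℕ) + 1 ∈ Finset.Icc 1 ℓ := by
    intro k hk
    rw [Finset.mem_Icc]
    exact ⟨by omega, by have := k.isLt; omega⟩
  have hscard : s.card = i := by
    have h := Finset.card_bij' (s := s) (t := Finset.range i)
      (fun (k : Fin ℓ) _ => (k : ℕ))
      (fun (j : ℕ) hj => (⟨j, by simp at hj; omega⟩ : Fin ℓ))
      (fun k hk => by rw [hmem_s] at hk; simpa using hk)
      (fun j hj => by rw [hmem_s]; show j < i; simp at hj; omega)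
      (fun k hk => rfl) (fun j hj => rfl)
    rw [h, Finset.card_range]
  -- the set {prod = 1} as an intersection
  have hsetA : ∀ d : Fin n,
      {ω | (∏ j ∈ Finset.Icc 1 i, Y j d ω) = 1} = ⋂ k ∈ s, F k ⁻¹' {v | v d = 1} := by
    intro d
    ext ω
    simp only [Set.mem_setOf_eq, Set.mem_iInter, Set.mem_preimage, hF]
    rw [aux_prod01 _ _ (fun j _ => hY01 j d ω)]
    constructor
    · intro h k hk
      exact h ((k : ℕ) + 1) (by rw [Finset.mem_Icc]; rw [hmem_s] at hk; omega)
    · intro h j hj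
      rw [Finset.mem_Icc] at hj
      have hjl : j - 1 < ℓ := by omega
      have := h ⟨j - 1, hjl⟩ (by rw [hmem_s]; simp; omega)
      simpa [Nat.sub_add_cancel hj.1] using this
  have hsetAB : ∀ d e : Fin n,
      {ω | (∏ j ∈ Finset.Icc 1 i, Y j d ω) = 1 ∧ (∏ j ∈ Finset.Icc 1 i, Y j e ω) = 1}
        = ⋂ k ∈ s, F k ⁻¹' {v | v d = 1 ∧ v e = 1} := by
    intro d e
    ext ω
    simp only [Set.mem_setOf_eq, Set.mem_iInter, Set.mem_preimage, hF]
    rw [aux_prod01 _ _ (fun j _ => hY01 j d ω), aux_prod01 _ _ (fun j _ => hY01 j e ω)]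
    constructor
    · rintro ⟨h1, h2⟩ k hk
      rw [hmem_s] at hk
      exact ⟨h1 _ (by rw [Finset.mem_Icc]; omega), h2 _ (by rw [Finset.mem_Icc]; omega)⟩
    · intro h
      refine ⟨fun j hj => ?_, fun j hj => ?_⟩ <;> rw [Finset.mem_Icc] at hj
      · have hjl : j - 1 < ℓ := by omega
        have := (h ⟨j - 1, hjl⟩ (by rw [hmem_s]; simp; omega)).1
        simpa [Nat.sub_add_cancel hj.1] using this
      · have hjl : j - 1 < ℓ := by omega
        have := (h ⟨j - 1, hjl⟩ (by rw [hmem_s]; simp; omega)).2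
        simpa [Nat.sub_add_cancel hj.1] using this
  have hmeasX : ∀ d : Fin n, Measurable (fun ω => ∏ j ∈ Finset.Icc 1 i, Y j d ω) :=
    fun d => Finset.measurable_prod _ (fun j _ => hmeas j d)
  have hX01 : ∀ (d : Fin n) ω, (∏ j ∈ Finset.Icc 1 i, Y j d ω) = 0 ∨
      (∏ j ∈ Finset.Icc 1 i, Y j d ω) = 1 :=
    fun d ω => aux_prod01' _ _ (fun j _ => hY01 j d ω)
  -- P(X_d = 1) = (1/2)^i
  have hone : ∀ d : Fin n,
      ℙ {ω | (∏ j ∈ Finset.Icc 1 i, Y j d ω) = 1} = (1 / 2 : ENNReal) ^ i := by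
    intro d
    rw [hsetA d]
    rw [hindep.measure_inter_preimage_eq_mul s (sets := fun _ => {v | v d = 1})
      (fun k _ => (measurable_pi_apply d) (measurableSet_singleton 1))]
    have : ∀ k ∈ s, ℙ (F k ⁻¹' {v | v d = 1}) = (1 / 2 : ENNReal) := by
      intro k hk
      have : F k ⁻¹' {v | v d = 1} = {ω | Y ((k : ℕ) + 1) d ω = 1} := rfl
      rw [this, hhalf _ (hmemIcc k hk) d]
    rw [Finset.prod_congr rfl this, Finset.prod_const, hscard]
  refine ⟨hone, ?_⟩
  intro d e hde a b
  -- joint probability for (1,1)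
  have hAB : ℙ {ω | (∏ j ∈ Finset.Icc 1 i, Y j d ω) = 1 ∧ (∏ j ∈ Finset.Icc 1 i, Y j e ω) = 1}
      = ℙ {ω | (∏ j ∈ Finset.Icc 1 i, Y j d ω) = 1}
        * ℙ {ω | (∏ j ∈ Finset.Icc 1 i, Y j e ω) = 1} := by
    rw [hsetAB d e]
    rw [hindep.measure_inter_preimage_eq_mul s (sets := fun _ => {v | v d = 1 ∧ v e = 1})
      (fun k _ => ((measurable_pi_apply d) (measurableSet_singleton 1)).inter
        ((measurable_pi_apply e) (measurableSet_singleton 1)))]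
    have heach : ∀ k ∈ s, ℙ (F k ⁻¹' {v | v d = 1 ∧ v e = 1})
        = (1 / 2 : ENNReal) * (1 / 2 : ENNReal) := by
      intro k hk
      have h1 : F k ⁻¹' {v | v d = 1 ∧ v e = 1}
          = {ω | Y ((k : ℕ) + 1) d ω = 1 ∧ Y ((k : ℕ) + 1) e ω = 1} := rfl
      rw [h1, hpair _ (hmemIcc k hk) d e hde 1 1,
        hhalf _ (hmemIcc k hk) d, hhalf _ (hmemIcc k hk) e]
    rw [Finset.prod_congr rfl heach, Finset.prod_const, hscard, hone d, hone e, mul_pow]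
  -- set up the events
  set A : Set Ω := {ω | (∏ j ∈ Finset.Icc 1 i, Y j d ω) = 1} with hAdef
  set B : Set Ω := {ω | (∏ j ∈ Finset.Icc 1 i, Y j e ω) = 1} with hBdef
  have hmA : MeasurableSet A := (hmeasX d) (measurableSet_singleton 1)
  have hmB : MeasurableSet B := (hmeasX e) (measurableSet_singleton 1)
  have hA0 : {ω | (∏ j ∈ Finset.Icc 1 i, Y j d ω) = 0} = Aᶜ := by
    ext ω
    simp only [Set.mem_setOf_eq, Set.mem_compl_iff, hAdef]
    rcases hX01 d ω with h | h <;> simp [h]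
  have hB0 : {ω | (∏ j ∈ Finset.Icc 1 i, Y j e ω) = 0} = Bᶜ := by
    ext ω
    simp only [Set.mem_setOf_eq, Set.mem_compl_iff, hBdef]
    rcases hX01 e ω with h | h <;> simp [h]
  have hABinter : ℙ (A ∩ B) = ℙ A * ℙ B := hAB
  rcases Nat.lt_or_ge a 2 with ha2 | ha2
  · rcases Nat.lt_or_ge b 2 with hb2 | hb2
    · interval_cases a <;> interval_cases b
      · -- a = 0, b = 0
        have h1 : ℙ (Aᶜ ∩ B) = ℙ Aᶜ * ℙ B := aux_indep_compl_left hmA hABinter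
        have h2 : ℙ (Aᶜ ∩ Bᶜ) = ℙ Aᶜ * ℙ Bᶜ := aux_indep_compl_right hmB h1
        have hset : {ω | (∏ j ∈ Finset.Icc 1 i, Y j d ω) = 0 ∧
            (∏ j ∈ Finset.Icc 1 i, Y j e ω) = 0} = Aᶜ ∩ Bᶜ := by
          rw [← hA0, ← hB0]; rfl
        rw [hset, hA0, hB0, h2]
      · -- a = 0, b = 1
        have h1 : ℙ (Aᶜ ∩ B) = ℙ Aᶜ * ℙ B := aux_indep_compl_left hmA hABinter
        have hset : {ω | (∏ j ∈ Finset.Icc 1 i, Y j d ω) = 0 ∧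
            (∏ j ∈ Finset.Icc 1 i, Y j e ω) = 1} = Aᶜ ∩ B := by
          rw [← hA0]; rfl
        rw [hset, hA0, h1]
      · -- a = 1, b = 0
        have h1 : ℙ (A ∩ Bᶜ) = ℙ A * ℙ Bᶜ := aux_indep_compl_right hmB hABinter
        have hset : {ω | (∏ j ∈ Finset.Icc 1 i, Y j d ω) = 1 ∧
            (∏ j ∈ Finset.Icc 1 i, Y j e ω) = 0} = A ∩ Bᶜ := by
          rw [← hB0]; rfl
        rw [hset, hB0, h1]
      · exact hAB
    · -- b ≥ 2 : sets empty
      have hBb : {ω | (∏ j ∈ Finset.Icc 1 i, Y j e ω) = b} = ∅ := by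
        ext ω; simp only [Set.mem_setOf_eq, Set.mem_empty_iff_false, iff_false]
        rcases hX01 e ω with h | h <;> omega
      have hABb : {ω | (∏ j ∈ Finset.Icc 1 i, Y j d ω) = a ∧
          (∏ j ∈ Finset.Icc 1 i, Y j e ω) = b} = ∅ := by
        ext ω; simp only [Set.mem_setOf_eq, Set.mem_empty_iff_false, iff_false, not_and]
        intro _; rcases hX01 e ω with h | h <;> omega
      rw [hBb, hABb, measure_empty, mul_zero]
  · -- a ≥ 2 : sets empty
    have hAa : {ω | (∏ j ∈ Finset.Icc 1 i, Y j d ω) = a} = ∅ := by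
      ext ω; simp only [Set.mem_setOf_eq, Set.mem_empty_iff_false, iff_false]
      rcases hX01 d ω with h | h <;> omega
    have hABa : {ω | (∏ j ∈ Finset.Icc 1 i, Y j d ω) = a ∧
        (∏ j ∈ Finset.Icc 1 i, Y j e ω) = b} = ∅ := by
      ext ω; simp only [Set.mem_setOf_eq, Set.mem_empty_iff_false, iff_false, not_and]
      intro h; rcases hX01 d ω with h' | h' <;> omega
    rw [hAa, hABa, measure_empty, zero_mul]
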